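/- Let n, p, m be positive integers and ε₁, ε₂ > 0. Let B, g̃₁, …, g̃ₚ, g₁, …, g_m, φ, τ₁, …, τₚ, σ₁, …, σ_m, f₁, …, fₙ be real multivariate polynomials in n variables. Suppose φ, each τᵢ, and each σⱼ are sums of squares of polynomials, and that the following three polynomials are sums of squares: (i) −B − Σᵢ₌₁ᵖ τᵢ·g̃ᵢ; (ii) B − ε₂ − Σⱼ₌₁ᵐ σⱼ·gⱼ; (iii) −Σₖ₌₁ⁿ (∂B/∂xₖ)·fₖ − φ·(ε₁ − B²) − ε₂·(x₁² + ⋯ + xₙ²). Then the polynomial dynamical system ẋ = f(x), where f = (f₁, …, fₙ), is safe with respect to 𝒳₀ = {x ∈ ℝⁿ : g̃₁(x) ≥ 0, …, g̃ₚ(x) ≥ 0} and 𝒳ᵤ = {x ∈ ℝⁿ : g₁(x) ≥ 0, …, g_m(x) ≥ 0}: if x : ℝ → ℝⁿ is differentiable with x′(t) = f(x(t)) for all t ≥ 0 and x(0) ∈ 𝒳₀, then x(t) ∉ 𝒳ᵤ for all t ≥ 0. -/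

import Mathlib

open MvPolynomial

/-- A multivariate real polynomial is a sum of squares if it is a finite sum of
squares of polynomials. -/
def IsSOSPoly {n : ℕ} (q : MvPolynomial (Fin n) ℝ) : Prop :=
  ∃ (k : ℕ) (h : Fin k → MvPolynomial (Fin n) ℝ), q = ∑ i : Fin k, (h i) ^ 2

lemma sos_eval_nonneg {n : ℕ} {q : MvPolynomial (Fin n) ℝ} (hq : IsSOSPoly q)
    (y : Fin n → ℝ) : 0 ≤ eval y q := by
  obtain ⟨k, h, rfl⟩ := hq
  simp only [map_sum, map_pow]
  exact Finset.sum_nonneg fun i _ => sq_nonneg _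

lemma hasDerivAt_eval_comp {n : ℕ} (x : ℝ → Fin n → ℝ) (x' : Fin n → ℝ) (t : ℝ)
    (hx : ∀ k, HasDerivAt (fun s => x s k) (x' k) t)
    (B : MvPolynomial (Fin n) ℝ) :
    HasDerivAt (fun s => eval (x s) B) (∑ k, eval (x t) (pderiv k B) * x' k) t := by
  induction B using MvPolynomial.induction_on with
  | C a =>
      simpa [eval_C, pderiv_C] using hasDerivAt_const t a
  | add q r hq hr =>
      simpa [add_mul, Finset.sum_add_distrib] using hq.fun_add hr
  | mul_X q k hq =>
      have h2 := hq.fun_mul (hx k)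
      have hsum : (∑ j, eval (x t) (pderiv j (q * X k)) * x' j)
          = (∑ j, eval (x t) (pderiv j q) * x' j) * x t k + eval (x t) q * x' k := by
        have hterm : ∀ j : Fin n, eval (x t) q * eval (x t) (pderiv j (X k)) * x' j
            = if j = k then eval (x t) q * x' k else 0 := by
          intro j
          by_cases h : j = k
          · subst h; simp [pderiv_X_self]
          · simp [pderiv_X_of_ne (Ne.symm h), h]
        simp only [pderiv_mul, map_add, map_mul, eval_X, add_mul, Finset.sum_add_distrib]
        congr 1
        · rw [Finset.sum_mul]
          exact Finset.sum_congr rfl fun j _ => by ring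
        · rw [Finset.sum_congr rfl (fun j _ => hterm j), Finset.sum_ite_eq' Finset.univ k]
          simp
      rw [hsum]
      simpa [map_mul, eval_X] using h2

/-- The three SOS conditions of Proposition 2 imply that the polynomial dynamical
system `ẋ = f x` is safe: every trajectory starting in the basic semialgebraic initial
set `𝒳₀` never enters the basic semialgebraic unsafe set `𝒳ᵤ`. -/
theorem sos_conditions_give_safety
    (n p m : ℕ) (hn : 0 < n) (hp : 0 < p) (hm : 0 < m)
    (ε₁ ε₂ : ℝ) (hε₁ : 0 < ε₁) (hε₂ : 0 < ε₂)
    (B : MvPolynomial (Fin n) ℝ)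
    (gt : Fin p → MvPolynomial (Fin n) ℝ)
    (g : Fin m → MvPolynomial (Fin n) ℝ)
    (φ : MvPolynomial (Fin n) ℝ)
    (τ : Fin p → MvPolynomial (Fin n) ℝ)
    (σ : Fin m → MvPolynomial (Fin n) ℝ)
    (f : Fin n → MvPolynomial (Fin n) ℝ)
    (hφ : IsSOSPoly φ)
    (hτ : ∀ i : Fin p, IsSOSPoly (τ i))
    (hσ : ∀ j : Fin m, IsSOSPoly (σ j))
    (hcond1 : IsSOSPoly (-B - ∑ i : Fin p, τ i * gt i))
    (hcond2 : IsSOSPoly (B - C ε₂ - ∑ j : Fin m, σ j * g j))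
    (hcond3 : IsSOSPoly
      (-(∑ k : Fin n, (pderiv k B) * f k) - φ * (C ε₁ - B ^ 2)
        - C ε₂ * (∑ k : Fin n, (X k) ^ 2)))
    (x : ℝ → (Fin n → ℝ))
    (hx : Differentiable ℝ x)
    (hode : ∀ t : ℝ, 0 ≤ t → deriv x t = fun k : Fin n => eval (x t) (f k))
    (hinit : ∀ i : Fin p, 0 ≤ eval (x 0) (gt i)) :
    ∀ t : ℝ, 0 ≤ t → ¬(∀ j : Fin m, 0 ≤ eval (x t) (g j)) := by
  intro t ht hunsafe
  set b : ℝ → ℝ := fun s => eval (x s) B with hbdef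
  -- derivative of b
  have hbderiv : ∀ s : ℝ, HasDerivAt b (∑ k, eval (x s) (pderiv k B) * deriv x s k) s := by
    intro s
    refine hasDerivAt_eval_comp x (deriv x s) s (fun k => ?_) B
    exact (hasDerivAt_pi.mp (hx s).hasDerivAt) k
  have hbcont : Continuous b :=
    continuous_iff_continuousAt.mpr fun s => (hbderiv s).continuousAt
  -- b 0 ≤ 0
  have hb0 : b 0 ≤ 0 := by
    have h1 := sos_eval_nonneg hcond1 (x 0)
    simp only [map_sub, map_neg, map_sum, map_mul] at h1
    have h2 : (0:ℝ) ≤ ∑ i : Fin p, eval (x 0) (τ i) * eval (x 0) (gt i) :=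
      Finset.sum_nonneg fun i _ => mul_nonneg (sos_eval_nonneg (hτ i) _) (hinit i)
    linarith
  -- b t ≥ ε₂
  have hbt : ε₂ ≤ b t := by
    have h1 := sos_eval_nonneg hcond2 (x t)
    simp only [map_sub, map_sum, map_mul, eval_C] at h1
    have h2 : (0:ℝ) ≤ ∑ j : Fin m, eval (x t) (σ j) * eval (x t) (g j) :=
      Finset.sum_nonneg fun j _ => mul_nonneg (sos_eval_nonneg (hσ j) _) (hunsafe j)
    linarith
  -- derivative nonpositivity where b² ≤ ε₁
  have hkey : ∀ s : ℝ, 0 ≤ s → (b s) ^ 2 ≤ ε₁ → deriv b s ≤ 0 := by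
    intro s hs hsb
    have h1 := sos_eval_nonneg hcond3 (x s)
    simp only [map_sub, map_neg, map_sum, map_mul, map_pow, eval_C, eval_X] at h1
    have hode' : ∀ k, deriv x s k = eval (x s) (f k) := fun k => by rw [hode s hs]
    have hderiv : deriv b s = ∑ k, eval (x s) (pderiv k B) * eval (x s) (f k) := by
      rw [(hbderiv s).deriv]
      exact Finset.sum_congr rfl fun k _ => by rw [hode' k]
    rw [hderiv]
    have h2 : 0 ≤ eval (x s) φ * (ε₁ - (b s) ^ 2) :=
      mul_nonneg (sos_eval_nonneg hφ _) (by linarith)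
    have h3 : (0:ℝ) ≤ ε₂ * ∑ k : Fin n, (x s k) ^ 2 :=
      mul_nonneg hε₂.le (Finset.sum_nonneg fun k _ => sq_nonneg _)
    simp only [hbdef] at h2
    linarith
  -- 0 < t
  have ht0 : 0 < t := by
    rcases ht.lt_or_eq with h | h
    · exact h
    · exfalso; rw [← h] at hbt; linarith
  -- δ
  set δ : ℝ := min ε₂ (Real.sqrt ε₁) with hδdef
  have hδpos : 0 < δ := lt_min hε₂ (Real.sqrt_pos.mpr hε₁)
  have hδsq : δ ^ 2 ≤ ε₁ := by
    have h1 : δ ≤ Real.sqrt ε₁ := min_le_right _ _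
    nlinarith [Real.sq_sqrt hε₁.le, hδpos.le]
  -- s₀ : last time ≤ t with b ≤ 0
  set S : Set ℝ := {s | s ∈ Set.Icc 0 t ∧ b s ≤ 0} with hSdef
  have hScompact : IsCompact S := by
    apply IsCompact.of_isClosed_subset (isCompact_Icc (a := (0:ℝ)) (b := t))
    · exact (isClosed_Icc).inter (isClosed_le hbcont continuous_const)
    · exact fun s hs => hs.1
  have hSne : S.Nonempty := ⟨0, ⟨le_refl 0, ht⟩, hb0⟩
  obtain ⟨s₀, hs₀S, hs₀max⟩ := hScompact.exists_isGreatest hSne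
  have hs₀mem : s₀ ∈ Set.Icc 0 t := hs₀S.1
  have hbs₀ : b s₀ ≤ 0 := hs₀S.2
  have hafter : ∀ s, s₀ < s → s ≤ t → 0 < b s := by
    intro s hs hst
    by_contra h
    push_neg at h
    have : s ∈ S := ⟨⟨le_trans hs₀mem.1 hs.le, hst⟩, h⟩
    exact absurd (hs₀max this) (not_le.mpr hs)
  have hs₀t : s₀ < t := by
    rcases (hs₀mem.2).lt_or_eq with h | h
    · exact h
    · exfalso; rw [h] at hbs₀; linarith
  -- u : first time in [s₀, t] with b ≥ δ
  set T : Set ℝ := {s | s ∈ Set.Icc s₀ t ∧ δ ≤ b s} with hTdef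
  have hTcompact : IsCompact T := by
    apply IsCompact.of_isClosed_subset (isCompact_Icc (a := s₀) (b := t))
    · exact (isClosed_Icc).inter (isClosed_le continuous_const hbcont)
    · exact fun s hs => hs.1
  have hTne : T.Nonempty := ⟨t, ⟨hs₀t.le, le_refl t⟩, le_trans (min_le_left _ _) hbt⟩
  obtain ⟨u, huT, humin⟩ := hTcompact.exists_isLeast hTne
  have humem : u ∈ Set.Icc s₀ t := huT.1
  have hbu : δ ≤ b u := huT.2
  have hs₀u : s₀ < u := by
    rcases (humem.1).lt_or_eq with h | h
    · exact h
    · exfalso; rw [← h] at hbu; linarith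
  have hbefore : ∀ s, s₀ ≤ s → s < u → b s < δ := by
    intro s hs hsu
    by_contra h
    push_neg at h
    have : s ∈ T := ⟨⟨hs, hsu.le.trans humem.2⟩, h⟩
    exact absurd (humin this) (not_le.mpr hsu)
  -- b antitone on [s₀, u]
  have hanti : AntitoneOn b (Set.Icc s₀ u) := by
    apply antitoneOn_of_deriv_nonpos (convex_Icc s₀ u) (hbcont.continuousOn)
    · intro s _
      exact ((hbderiv s).differentiableAt).differentiableWithinAt
    · intro s hs
      rw [interior_Icc] at hs
      have h1 : 0 < b s := hafter s hs.1 (hs.2.le.trans humem.2)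
      have h2 : b s < δ := hbefore s hs.1.le hs.2
      apply hkey s (le_trans hs₀mem.1 hs.1.le)
      nlinarith
  have : b u ≤ b s₀ :=
    hanti (Set.left_mem_Icc.mpr hs₀u.le) (Set.right_mem_Icc.mpr hs₀u.le) hs₀u.le
  linarith
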